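/- Let p be a prime, n, m positive integers, and F : 𝔽_p^n → 𝔽_p^m a function. If Nb_F < p^{2(n−m)}/(1 − p^{−m}), then F is surjective. -/

import Mathlib

open Finset

/-- The Walsh transform of `F : 𝔽_p^n → 𝔽_p^m` at `(b, a)`. -/
noncomputable def walsh (p n m : ℕ) [NeZero p] (F : (Fin n → ZMod p) → (Fin m → ZMod p))
    (b : Fin m → ZMod p) (a : Fin n → ZMod p) : ℂ :=
  ∑ x : Fin n → ZMod p,
    Complex.exp (2 * Real.pi * Complex.I *
      ((((∑ i, b i * F x i) - ∑ i, a i * x i).val : ℤ) : ℂ) / p)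

/-- The imbalance `Nb_F = p^{-m} ∑_{b ≠ 0} |W_F(b,0)|²`. -/
noncomputable def imbalance (p n m : ℕ) [NeZero p]
    (F : (Fin n → ZMod p) → (Fin m → ZMod p)) : ℝ :=
  ((p : ℝ) ^ m)⁻¹ *
    ∑ b ∈ univ.filter (fun b : Fin m → ZMod p => b ≠ 0),
      ‖walsh p n m F b 0‖ ^ 2

/-- The size of the preimage set `F⁻¹(β)`. -/
def fiberCard (p n m : ℕ) [NeZero p] (F : (Fin n → ZMod p) → (Fin m → ZMod p))
    (β : Fin m → ZMod p) : ℕ :=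
  (univ.filter fun x => F x = β).card

/- ### Auxiliary lemmas -/

lemma addChar_map_sum {A : Type*} [AddCommMonoid A] {ι : Type*} (ψ : AddChar A ℂ)
    (s : Finset ι) (f : ι → A) : ψ (∑ i ∈ s, f i) = ∏ i ∈ s, ψ (f i) := by
  classical
  induction s using Finset.induction with
  | empty => simp
  | insert _ _ h ih => simp [Finset.sum_insert h, Finset.prod_insert h, AddChar.map_add_eq_mul, ih]

lemma ortho1 (p : ℕ) [NeZero p] (t : ZMod p) :
    ∑ c : ZMod p, ZMod.stdAddChar (t * c) = if t = 0 then (p : ℂ) else 0 := by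
  split_ifs with h
  · simp [h, ZMod.card]
  · exact AddChar.sum_eq_zero_of_ne_one (ZMod.isPrimitive_stdAddChar p h)

lemma orthoVec (p m : ℕ) [NeZero p] (u : Fin m → ZMod p) :
    ∑ b : Fin m → ZMod p, ZMod.stdAddChar (∑ i, u i * b i)
      = if u = 0 then ((p : ℂ)) ^ m else 0 := by
  have h1 : ∀ b : Fin m → ZMod p,
      ZMod.stdAddChar (∑ i, u i * b i) = ∏ i, ZMod.stdAddChar (u i * b i) :=
    fun b => addChar_map_sum _ _ _
  simp only [h1]
  rw [← Fintype.prod_sum fun i c => ZMod.stdAddChar (u i * c)]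
  simp only [ortho1]
  split_ifs with h
  · simp [h]
  · obtain ⟨i, hi⟩ := Function.ne_iff.mp h
    simp only [Pi.zero_apply] at hi
    exact Finset.prod_eq_zero (Finset.mem_univ i) (by simp [hi])

lemma exp_eq (p : ℕ) [NeZero p] (z : ZMod p) :
    Complex.exp (2 * Real.pi * Complex.I * ((z.val : ℤ) : ℂ) / p) = ZMod.stdAddChar z := by
  have h := ZMod.stdAddChar_coe (N := p) (z.val : ℤ)
  have hz : (((z.val : ℤ) : ZMod p)) = z := by push_cast; simp [ZMod.natCast_val, ZMod.cast_id]
  rw [hz] at h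
  rw [h]

lemma walsh_zero (p n m : ℕ) [NeZero p] (F : (Fin n → ZMod p) → (Fin m → ZMod p))
    (b : Fin m → ZMod p) :
    walsh p n m F b 0 = ∑ x : Fin n → ZMod p, ZMod.stdAddChar (∑ i, b i * F x i) := by
  unfold walsh
  refine Finset.sum_congr rfl fun x _ => ?_
  rw [show (∑ i, b i * F x i) - ∑ i, (0 : Fin n → ZMod p) i * x i = ∑ i, b i * F x i by simp]
  exact exp_eq p _

lemma conj_std (p : ℕ) [NeZero p] (z : ZMod p) :
    (starRingEnd ℂ) (ZMod.stdAddChar z) = ZMod.stdAddChar (-z) := by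
  have habs : ‖(ZMod.stdAddChar z : ℂ)‖ = 1 := by
    rw [ZMod.stdAddChar_apply]; exact Circle.norm_coe _
  have h1 : ZMod.stdAddChar z * ZMod.stdAddChar (-z) = 1 := by
    rw [← AddChar.map_add_eq_mul]; simp
  have h2 : ZMod.stdAddChar z * (starRingEnd ℂ) (ZMod.stdAddChar z) = 1 := by
    rw [Complex.mul_conj, Complex.normSq_eq_norm_sq, habs]; norm_num
  have hne : (ZMod.stdAddChar z : ℂ) ≠ 0 := by
    intro h; rw [h, zero_mul] at h1; exact one_ne_zero h1.symm
  exact mul_left_cancel₀ hne (h2.trans h1.symm)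

lemma key (p n m : ℕ) [NeZero p] (F : (Fin n → ZMod p) → (Fin m → ZMod p)) :
    ∑ b : Fin m → ZMod p, ((‖walsh p n m F b 0‖ : ℝ) : ℂ) ^ 2
      = (p : ℂ) ^ m *
        ∑ β : Fin m → ZMod p,
          ((univ.filter fun x => F x = β).card : ℂ) ^ 2 := by
  have step1 : ∀ b : Fin m → ZMod p,
      ((‖walsh p n m F b 0‖ : ℝ) : ℂ) ^ 2
        = ∑ x : Fin n → ZMod p, ∑ y : Fin n → ZMod p,
            ZMod.stdAddChar (∑ i, (F x i - F y i) * b i) := by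
    intro b
    have : ((‖walsh p n m F b 0‖ : ℝ) : ℂ) ^ 2
        = walsh p n m F b 0 * (starRingEnd ℂ) (walsh p n m F b 0) := by
      rw [Complex.mul_conj, Complex.normSq_eq_norm_sq]; push_cast; ring
    rw [this, walsh_zero, map_sum]
    rw [Finset.sum_mul_sum]
    refine Finset.sum_congr rfl fun x _ => Finset.sum_congr rfl fun y _ => ?_
    rw [conj_std, ← AddChar.map_add_eq_mul]
    congr 1
    rw [← Finset.sum_neg_distrib, ← Finset.sum_add_distrib]
    refine Finset.sum_congr rfl fun i _ => by ring
  simp only [step1]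
  rw [Finset.sum_comm]
  have step2 : ∀ x : Fin n → ZMod p,
      ∑ b : Fin m → ZMod p, ∑ y : Fin n → ZMod p,
          ZMod.stdAddChar (∑ i, (F x i - F y i) * b i)
        = ∑ y : Fin n → ZMod p, if F x = F y then (p : ℂ) ^ m else 0 := by
    intro x
    rw [Finset.sum_comm]
    refine Finset.sum_congr rfl fun y _ => ?_
    rw [orthoVec p m (fun i => F x i - F y i)]
    congr 1
    simp only [funext_iff, Pi.zero_apply, sub_eq_zero]
  simp only [step2]
  have step3 : ∑ x : Fin n → ZMod p, ∑ y : Fin n → ZMod p,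
      (if F x = F y then (p : ℂ) ^ m else 0)
      = (p : ℂ) ^ m * ∑ x : Fin n → ZMod p,
          ((univ.filter fun y => F y = F x).card : ℂ) := by
    rw [Finset.mul_sum]
    refine Finset.sum_congr rfl fun x _ => ?_
    simp only [eq_comm (a := F x)]
    rw [← Finset.sum_filter, Finset.sum_const, nsmul_eq_mul, mul_comm]
  rw [step3]
  congr 1
  rw [← Finset.sum_fiberwise (g := F) (f := fun x => ((univ.filter fun y => F y = F x).card : ℂ))]
  refine Finset.sum_congr rfl fun β _ => ?_
  have hc : ∀ x ∈ univ.filter (fun x => F x = β),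
      ((univ.filter fun y => F y = F x).card : ℂ)
        = ((univ.filter fun x => F x = β).card : ℂ) := by
    intro x hx
    simp only [Finset.mem_filter] at hx
    rw [hx.2]
  rw [Finset.sum_congr rfl hc, Finset.sum_const, nsmul_eq_mul, sq]

theorem surjective_of_imbalance_lt (p n m : ℕ) [NeZero p] (hp : p.Prime)
    (hn : 0 < n) (hm : 0 < m)
    (F : (Fin n → ZMod p) → (Fin m → ZMod p))
    (h : imbalance p n m F < (p : ℝ) ^ (2 * ((n : ℤ) - (m : ℤ))) / (1 - ((p : ℝ) ^ m)⁻¹)) :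
    Function.Surjective F := by
  by_contra hsurj
  rw [Function.Surjective] at hsurj
  push_neg at hsurj
  obtain ⟨β₀, hβ₀⟩ := hsurj
  set P : ℝ := (p : ℝ) with hP
  have hp1 : (1 : ℝ) < P := by rw [hP]; exact_mod_cast hp.one_lt
  set B : ℝ := P ^ m with hBdef
  set A : ℝ := P ^ n with hAdef
  have hB1 : 1 < B := one_lt_pow₀ hp1 hm.ne'
  have hB0 : (0 : ℝ) < B := by linarith
  have hA0 : (0 : ℝ) < A := pow_pos (by linarith) n
  set N : (Fin m → ZMod p) → ℕ := fiberCard p n m F with hNdef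
  set Q : ℝ := ∑ β : Fin m → ZMod p, (N β : ℝ) ^ 2 with hQdef
  -- total sum over all b
  have hreal : ∑ b : Fin m → ZMod p, ‖walsh p n m F b 0‖ ^ 2 = B * Q := by
    have hc := key p n m F
    have h2 : ((∑ b : Fin m → ZMod p, ‖walsh p n m F b 0‖ ^ 2 : ℝ) : ℂ)
        = ((((p : ℝ) ^ m * ∑ β : Fin m → ZMod p, ((fiberCard p n m F β : ℝ)) ^ 2 : ℝ)) : ℂ) := by
      push_cast [fiberCard]
      exact hc
    have h3 := Complex.ofReal_injective h2
    rw [h3, hBdef, hQdef, hNdef, hP]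
  -- walsh at b = 0
  have hW0 : walsh p n m F 0 0 = (p : ℂ) ^ n := by
    rw [walsh_zero]
    have : ∀ x : Fin n → ZMod p, ZMod.stdAddChar (∑ i, (0 : Fin m → ZMod p) i * F x i)
        = (1 : ℂ) := by intro x; simp
    rw [Finset.sum_congr rfl fun x _ => this x]
    simp [Finset.card_univ, ZMod.card]
  have hW0abs : ‖walsh p n m F 0 0‖ ^ 2 = A ^ 2 := by
    rw [hW0]
    rw [norm_pow]
    simp [hAdef, hP]
  -- sum over nonzero b
  have hsplit : ∑ b ∈ univ.filter (fun b : Fin m → ZMod p => b ≠ 0),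
      ‖walsh p n m F b 0‖ ^ 2 = B * Q - A ^ 2 := by
    have := Finset.sum_erase_add univ
      (fun b : Fin m → ZMod p => ‖walsh p n m F b 0‖ ^ 2) (Finset.mem_univ 0)
    rw [Finset.filter_ne' univ (0 : Fin m → ZMod p)]
    rw [hreal, hW0abs] at this
    linarith
  have himb : imbalance p n m F = Q - A ^ 2 / B := by
    rw [imbalance, hsplit, ← hP, ← hBdef]
    field_simp
  -- fiber counts
  have hNsum : ∑ β : Fin m → ZMod p, (N β : ℝ) = A := by
    have hc : (Finset.univ : Finset (Fin n → ZMod p)).card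
        = ∑ β : Fin m → ZMod p, N β := by
      exact Finset.card_eq_sum_card_fiberwise fun x _ => Finset.mem_univ (F x)
    have : ((Finset.univ : Finset (Fin n → ZMod p)).card : ℝ) = A := by
      simp [Finset.card_univ, ZMod.card, hAdef, hP]
    rw [hc] at this
    rw [← this]
    push_cast
    rfl
  have hN0 : N β₀ = 0 := by
    simp only [hNdef, fiberCard, Finset.card_eq_zero, Finset.filter_eq_empty_iff]
    intro x _
    exact hβ₀ x
  -- Cauchy-Schwarz
  have hcs : A ^ 2 ≤ (B - 1) * Q := by
    have h1 : (∑ β ∈ univ.erase β₀, (N β : ℝ)) ^ 2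
        ≤ (univ.erase β₀).card * ∑ β ∈ univ.erase β₀, (N β : ℝ) ^ 2 :=
      sq_sum_le_card_mul_sum_sq
    have h2 : ∑ β ∈ univ.erase β₀, (N β : ℝ) = A := by
      rw [Finset.sum_erase _ (by simp [hN0])]
      exact hNsum
    have h3 : ∑ β ∈ univ.erase β₀, (N β : ℝ) ^ 2 = Q := by
      rw [Finset.sum_erase _ (by simp [hN0])]
    have h4 : ((univ.erase β₀).card : ℝ) = B - 1 := by
      rw [Finset.card_erase_of_mem (Finset.mem_univ β₀)]
      have hcard : (Finset.univ : Finset (Fin m → ZMod p)).card = p ^ m := by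
        simp [Finset.card_univ, ZMod.card]
      rw [hcard]
      have : 1 ≤ p ^ m := Nat.one_le_pow _ _ hp.pos
      push_cast [this]
      rfl
    rw [h2, h3, h4] at h1
    exact h1
  -- rewrite the RHS of h
  have hRHS : (p : ℝ) ^ (2 * ((n : ℤ) - (m : ℤ))) / (1 - ((p : ℝ) ^ m)⁻¹)
      = A ^ 2 / (B * (B - 1)) := by
    have hPne : P ≠ 0 := by linarith
    have hzp : (p : ℝ) ^ (2 * ((n : ℤ) - (m : ℤ))) = A ^ 2 / B ^ 2 := by
      rw [show (2 * ((n : ℤ) - (m : ℤ))) = 2 * (n : ℤ) - 2 * (m : ℤ) by ring]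
      rw [zpow_sub₀ hPne]
      rw [show (2 * (n : ℤ)) = ((2 * n : ℕ) : ℤ) by push_cast; ring,
        show (2 * (m : ℤ)) = ((2 * m : ℕ) : ℤ) by push_cast; ring]
      rw [zpow_natCast, zpow_natCast]
      rw [hAdef, hBdef, show 2 * n = n * 2 from Nat.mul_comm 2 n,
        show 2 * m = m * 2 from Nat.mul_comm 2 m, pow_mul, pow_mul]
    rw [hzp]
    rw [hBdef]
    have hBne : B ≠ 0 := ne_of_gt hB0
    have hBm1 : B - 1 ≠ 0 := by intro hh; linarith
    rw [← hBdef]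
    field_simp
  rw [hRHS, himb] at h
  -- contradiction
  have hfinal : A ^ 2 / (B * (B - 1)) ≤ Q - A ^ 2 / B := by
    rw [div_le_iff₀ (by nlinarith : (0 : ℝ) < B * (B - 1))]
    have hexp : (Q - A ^ 2 / B) * (B * (B - 1)) = B * (B - 1) * Q - (B - 1) * A ^ 2 := by
      field_simp
    rw [hexp]
    nlinarith [hcs, hB0, hB1]
  linarith
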